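/- Let K ⊆ L be finite fields with ω ∈ L \ K, let q = |K|, m = q+1, and enumerate K = {x_1, ..., x_q}. Let C_1 ⊆ L^m be the K-span of v_1 = (1,1,...,1,0) and v_2 = (x_1, x_2, ..., x_q, 1). Then every nonzero codeword of C_1 has Hamming weight exactly m−1 = q. -/
import Mathlib


theorem stmt_6 (K L : Type*) [Field K] [Fintype K] [Field L] [Fintype L]
    [Algebra K L] [DecidableEq L]
    (x : Fin (Fintype.card K) → K) (hx : Function.Bijective x)
    (v1 v2 : Fin (Fintype.card K + 1) → L)
    (hv1 : v1 = fun i => if i.val < Fintype.card K then 1 else 0)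
    (hv2 : v2 = fun i => if h : i.val < Fintype.card K
      then algebraMap K L (x ⟨i.val, h⟩) else 1) :
    ∀ c ∈ Submodule.span K {v1, v2}, c ≠ 0 → hammingNorm c = Fintype.card K := by
  intro c hc hne
  rw [Submodule.mem_span_pair] at hc
  obtain ⟨a, b, rfl⟩ := hc
  have hcoord : ∀ i : Fin (Fintype.card K + 1), (a • v1 + b • v2) i =
      if h : i.val < Fintype.card K then algebraMap K L (a + b * x ⟨i.val, h⟩)
      else algebraMap K L b := by
    intro i
    by_cases h : i.val < Fintype.card K <;>
      simp [hv1, hv2, h, Algebra.smul_def, map_add, map_mul]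
  have hzero : ∀ i : Fin (Fintype.card K + 1), ((a • v1 + b • v2) i = 0) ↔
      (∃ h : i.val < Fintype.card K, a + b * x ⟨i.val, h⟩ = 0) ∨
        (¬ i.val < Fintype.card K ∧ b = 0) := by
    intro i
    rw [hcoord i]
    by_cases h : i.val < Fintype.card K
    · rw [dif_pos h, map_eq_zero]
      constructor
      · intro hz; exact Or.inl ⟨h, hz⟩
      · rintro (⟨_, hz⟩ | ⟨hn, _⟩)
        · exact hz
        · exact absurd h hn
    · rw [dif_neg h, map_eq_zero]
      simp [h]
  have key : (Finset.univ.filter (fun i => (a • v1 + b • v2) i = 0)).card = 1 := by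
    by_cases hb : b = 0
    · have ha : a ≠ 0 := by
        intro h0
        apply hne
        rw [h0, hb]
        simp
      have hfs : (Finset.univ.filter fun i : Fin (Fintype.card K + 1) =>
          (a • v1 + b • v2) i = 0) = {Fin.last (Fintype.card K)} := by
        ext i
        simp only [Finset.mem_filter, Finset.mem_univ, true_and, Finset.mem_singleton,
          hzero i]
        constructor
        · rintro (⟨h, hz⟩ | ⟨h, _⟩)
          · rw [hb] at hz
            simp at hz
            exact absurd hz ha
          · have hi := i.isLt
            exact Fin.ext (by simp only [Fin.val_last]; omega)
        · rintro rfl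
          right
          exact ⟨by simp, hb⟩
      rw [hfs, Finset.card_singleton]
    · have htz : a + b * (-(a / b)) = 0 := by
        field_simp
        ring
      set j := (Equiv.ofBijective x hx).symm (-(a / b)) with hj
      have hxj : x j = -(a / b) := (Equiv.ofBijective x hx).apply_symm_apply _
      have hfs : (Finset.univ.filter fun i : Fin (Fintype.card K + 1) =>
          (a • v1 + b • v2) i = 0) = {j.castSucc} := by
        ext i
        simp only [Finset.mem_filter, Finset.mem_univ, true_and, Finset.mem_singleton,
          hzero i]
        constructor
        · rintro (⟨h, hz⟩ | ⟨_, hb0⟩)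
          · have h1 : b * x ⟨i.val, h⟩ = b * (-(a / b)) := by
              linear_combination hz - htz
            have hxv : x ⟨i.val, h⟩ = -(a / b) := mul_left_cancel₀ hb h1
            have hij : (⟨i.val, h⟩ : Fin (Fintype.card K)) = j := by
              rw [hj, Equiv.eq_symm_apply]
              exact hxv
            exact Fin.ext (by simpa using congrArg Fin.val hij)
          · exact absurd hb0 hb
        · rintro rfl
          left
          refine ⟨by simpa using j.isLt, ?_⟩
          have hjj : (⟨j.castSucc.val, by simpa using j.isLt⟩ : Fin (Fintype.card K)) = j :=
            Fin.ext (by simp)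
          rw [hjj, hxj]
          exact htz
      rw [hfs, Finset.card_singleton]
  have hsum := Finset.card_filter_add_card_filter_not
    (s := (Finset.univ : Finset (Fin (Fintype.card K + 1))))
    (p := fun i => (a • v1 + b • v2) i = 0)
  simp only [Finset.card_univ, Fintype.card_fin] at hsum
  have hnorm : hammingNorm (a • v1 + b • v2)
      = (Finset.univ.filter (fun i => ¬ (a • v1 + b • v2) i = 0)).card := rfl
  omega
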